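/- If C is a countable family of nonempty subshifts over finite alphabets and each member X_i ⊆ A_i^ℤ satisfies |A_i| ≤ 2^{n_i} for some strictly increasing sequence (n_i), then there exist a single finite alphabet B, a subshift X ⊆ B^ℤ, and continuous shift-power-commuting surjections R_i : X → X_i such that {R_i(X) : i ∈ ℕ} = C. (Non-effective version of Theorem 4.) -/

import Mathlib

/-- The shift map on `A^ℤ`. -/
def shiftMap (A : Type*) : (ℤ → A) → (ℤ → A) := fun x i => x (i + 1)

namespace Stmt17

open scoped Classical

/-- exact 2-adic valuation predicate -/
def V (x : ℤ) (j : ℕ) : Prop := (2 ^ j : ℤ) ∣ x ∧ ¬ (2 ^ (j + 1) : ℤ) ∣ x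

lemma V_unique {x : ℤ} {j j' : ℕ} (h : V x j) (h' : V x j') : j = j' := by
  by_contra hne
  rcases Nat.lt_or_ge j j' with hlt | hge
  · exact h.2 (dvd_trans (pow_dvd_pow (2:ℤ) hlt) h'.1)
  · exact h'.2 (dvd_trans (pow_dvd_pow (2:ℤ) (lt_of_le_of_ne hge (Ne.symm hne) |>.le.trans_lt (Nat.lt_succ_self j) |> fun _ => Nat.succ_le_of_lt (lt_of_le_of_ne hge (Ne.symm hne)))) h.1)

lemma V_add {x d : ℤ} {j : ℕ} (hd : V d j) (hx : (2 ^ (j + 1) : ℤ) ∣ x) : V (x + d) j := by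
  constructor
  · exact dvd_add (dvd_trans (pow_dvd_pow (2:ℤ) (Nat.le_succ j)) hx) hd.1
  · intro h
    exact hd.2 (by simpa using dvd_sub h hx)

lemma exists_pow_not_dvd (x : ℤ) (hx : x ≠ 0) : ∃ j : ℕ, ¬ (2 ^ (j + 1) : ℤ) ∣ x := by
  refine ⟨x.natAbs, fun h => ?_⟩
  rw [show ((2:ℤ) ^ (x.natAbs + 1)) = ((2 ^ (x.natAbs + 1) : ℕ) : ℤ) by push_cast; ring,
    Int.natCast_dvd] at h
  have h1 : 2 ^ (x.natAbs + 1) ≤ x.natAbs := Nat.le_of_dvd (Int.natAbs_pos.mpr hx) h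
  have h2 : x.natAbs < 2 ^ (x.natAbs + 1) :=
    (Nat.lt_two_pow_self (n := x.natAbs)).trans (Nat.pow_lt_pow_right one_lt_two (Nat.lt_succ_self _))
  omega

noncomputable def vmin (x : ℤ) (hx : x ≠ 0) : ℕ := Nat.find (exists_pow_not_dvd x hx)

lemma V_vmin (x : ℤ) (hx : x ≠ 0) : V x (vmin x hx) := by
  constructor
  · rcases Nat.eq_zero_or_pos (vmin x hx) with h0 | hpos
    · rw [h0]; exact one_dvd x
    · have := Nat.find_min (exists_pow_not_dvd x hx) (m := vmin x hx - 1) (Nat.sub_lt hpos one_pos)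
      push_neg at this
      have h2 : vmin x hx - 1 + 1 = vmin x hx := Nat.succ_pred_eq_of_pos hpos
      rwa [h2] at this
  · exact Nat.find_spec (exists_pow_not_dvd x hx)

lemma three_ne (t : ℤ) : 3 * t + 1 ≠ 0 := by omega

/-- the layer of `t` -/
noncomputable def ell (t : ℤ) : ℕ := vmin (3 * t + 1) (three_ne t)

lemma V_ell (t : ℤ) : V (3 * t + 1) (ell t) := V_vmin _ _

lemma ell_eq {t : ℤ} {j : ℕ} (h : V (3 * t + 1) j) : ell t = j := V_unique (V_ell t) h

lemma ell_congr {t t' : ℤ} {i : ℕ} (h : ell t = i) (hd : (2 ^ (i + 1) : ℤ) ∣ (t' - t)) :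
    ell t' = i := by
  apply ell_eq
  have : (3 * t' + 1) = (3 * (t' - t)) + (3 * t + 1) := by ring
  rw [this]
  exact V_add (h ▸ V_ell t) (Dvd.dvd.mul_left hd 3)

lemma exists_layer (i : ℕ) : ∃ r : ℤ, ell r = i := by
  have hc : IsCoprime (3 : ℤ) (2 ^ (i + 1)) :=
    IsCoprime.pow_right (Int.isCoprime_iff_gcd_eq_one.mpr (by decide))
  obtain ⟨u, v, huv⟩ := hc
  refine ⟨u * (2 ^ i - 1), ell_eq ?_⟩
  have key : 3 * (u * (2 ^ i - 1)) + 1 = 2 ^ i * (1 - 2 * v * (2 ^ i - 1)) := by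
    have h2 : (2:ℤ) ^ (i + 1) = 2 ^ i * 2 := by ring
    linear_combination (2 ^ i - 1 : ℤ) * huv
  rw [key]
  refine ⟨Dvd.intro _ rfl, fun h => ?_⟩
  have h2 : (2:ℤ) ^ (i + 1) = 2 ^ i * 2 := by ring
  rw [h2] at h
  have h3 := (mul_dvd_mul_iff_left (a := (2:ℤ) ^ i) (by positivity)).mp h
  have h4 : (2:ℤ) ∣ 1 := by
    have : (1:ℤ) = (1 - 2 * v * (2 ^ i - 1)) + 2 * (v * (2 ^ i - 1)) := by ring
    rw [this]; exact dvd_add h3 ⟨v * (2 ^ i - 1), rfl⟩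
  norm_num at h4

/-- the canonical layer-i residue in [0, 2^(i+1)) -/
noncomputable def rho (i : ℕ) : ℤ := (Classical.choose (exists_layer i)) % (2 ^ (i + 1))

lemma rho_nonneg (i : ℕ) : 0 ≤ rho i := Int.emod_nonneg _ (by positivity)
lemma rho_lt (i : ℕ) : rho i < 2 ^ (i + 1) := Int.emod_lt_of_pos _ (by positivity)
lemma ell_rho (i : ℕ) : ell (rho i) = i := by
  have h := Classical.choose_spec (exists_layer i)
  refine ell_congr h ?_
  rw [rho, Int.emod_def]
  exact ⟨-(Classical.choose (exists_layer i) / 2 ^ (i + 1)), by ring⟩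

/-- The phase lemma. -/
lemma phase (K : ℕ) (a b c : ℤ)
    (h : ∀ t : ℤ, c ≤ t → t ≤ c + 2 ^ (K + 1) → ell (t + a) % 2 = ell (t + b) % 2) :
    (2 ^ K : ℤ) ∣ (a - b) := by
  by_contra hdvd
  have hne : a - b ≠ 0 := by rintro h0; exact hdvd (h0 ▸ dvd_zero _)
  set j := vmin (a - b) hne with hj
  have hV : V (a - b) j := V_vmin (a - b) hne
  have hjK : j < K := by
    by_contra hge
    exact hdvd (dvd_trans (pow_dvd_pow (2:ℤ) (Nat.le_of_not_lt hge)) hV.1)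
  obtain ⟨r, hr⟩ := exists_layer (j + 1)
  have hMpos : (0:ℤ) < 2 ^ (j + 2) := by positivity
  set t : ℤ := c + (r - a - c) % (2 ^ (j + 2)) with ht
  have h1 : c ≤ t := by
    have := Int.emod_nonneg (r - a - c) hMpos.ne'
    omega
  have h2 : t ≤ c + 2 ^ (K + 1) := by
    have hlt := Int.emod_lt_of_pos (r - a - c) hMpos
    have hle : (2:ℤ) ^ (j + 2) ≤ 2 ^ (K + 1) :=
      pow_le_pow_right₀ (by norm_num) (by omega)
    omega
  have hta : ell (t + a) = j + 1 := by
    refine ell_congr hr ?_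
    have heq : t + a - r = (r - a - c) % (2 ^ (j + 2)) - (r - a - c) := by rw [ht]; ring
    rw [heq, Int.emod_def]
    exact ⟨-((r - a - c) / 2 ^ (j + 2)), by ring⟩
  have htb : ell (t + b) = j := by
    apply ell_eq
    have hsplit : 3 * (t + b) + 1 = (3 * (t + a) + 1) + 3 * (b - a) := by ring
    rw [hsplit]
    apply V_add
    · refine ⟨(dvd_sub_comm.mp hV.1).mul_left 3, fun hcon => ?_⟩
      have hcop : IsCoprime ((2:ℤ) ^ (j + 1)) 3 :=
        IsCoprime.pow_left (Int.isCoprime_iff_gcd_eq_one.mpr (by decide))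
      have h5 : (2:ℤ) ^ (j + 1) ∣ (b - a) := hcop.dvd_of_dvd_mul_left hcon
      exact hV.2 (dvd_sub_comm.mp h5)
    · have hV1 := V_ell (t + a)
      rw [hta] at hV1
      exact dvd_trans (pow_dvd_pow 2 (by omega)) hV1.1
  have hpar := h t h1 h2
  rw [hta, htb] at hpar
  omega


section Construction

universe u
variable {A : ℕ → Type u} [∀ i, Finite (A i)]
variable (X : ∀ i, Set (ℤ → A i)) (hne : ∀ i, (X i).Nonempty)
variable (n : ℕ → ℕ) (hcard : ∀ i, Nat.card (A i) ≤ 2 ^ n i)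

lemma emb_ex (hc : ∀ i, Nat.card (A i) ≤ 2 ^ n i) (i : ℕ) :
    Nonempty (A i ↪ (Fin (n i) → Fin 2)) := by
  have : Fintype (A i) := Fintype.ofFinite _
  apply Function.Embedding.nonempty_of_card_le
  rw [Fintype.card_fun]
  calc Fintype.card (A i) = Nat.card (A i) := (Nat.card_eq_fintype_card).symm
    _ ≤ 2 ^ n i := hc i
    _ = Fintype.card (Fin 2) ^ Fintype.card (Fin (n i)) := by simp

noncomputable def enc (i : ℕ) : A i ↪ (Fin (n i) → Fin 2) := (emb_ex n hcard i).some

noncomputable def defA (i : ℕ) : A i := (hne i).some 0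

noncomputable def decA (i : ℕ) (b : Fin (n i) → Fin 2) : A i :=
  if h : ∃ a : A i, enc n hcard i a = b then Classical.choose h else defA X hne i

lemma decA_enc (i : ℕ) (a : A i) : decA X hne n hcard i (enc n hcard i a) = a := by
  rw [decA, dif_pos ⟨a, rfl⟩]
  exact (enc n hcard i).injective (Classical.choose_spec (⟨a, rfl⟩ : ∃ a', enc n hcard i a' = enc n hcard i a))

/-- data track content assuming layer `i` -/
noncomputable def G (y : ∀ j, ℤ → A j) (i : ℕ) (t : ℤ) : Fin 2 :=
  if h : ((t % (2 ^ (i + 1 + n i) : ℤ)) / (2 ^ (i + 1) : ℤ)).toNat < n i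
  then enc n hcard i (y i (t / (2 ^ (i + 1 + n i) : ℤ))) ⟨_, h⟩
  else 0

noncomputable def D (y : ∀ j, ℤ → A j) (t : ℤ) : Fin 2 := G n hcard y (ell t) t

/-- the base configuration -/
noncomputable def F (y : ∀ j, ℤ → A j) (t : ℤ) : Fin 4 :=
  ⟨ell t % 2 + 2 * (D n hcard y t).val, by
    have h1 := (D n hcard y t).isLt
    omega⟩

/-- the decoding maps -/
noncomputable def R (i : ℕ) (x : ℤ → Fin 4) (s : ℤ) : A i :=
  if h : ∃ k : ℤ, ∀ t : ℤ, s * 2 ^ (i + 1 + n i) - 2 * 2 ^ (i + 1 + n i) ≤ t →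
      t ≤ s * 2 ^ (i + 1 + n i) + 2 * 2 ^ (i + 1 + n i) → ((x t).val % 2 : ℕ) = ell (t + k) % 2
  then
    decA X hne n hcard i (fun p =>
      ⟨(x ((s + (Classical.choose h) / 2 ^ (i + 1 + n i)) * 2 ^ (i + 1 + n i) + rho i
          + 2 ^ (i + 1) * (p : ℤ) - Classical.choose h)).val / 2, by
        have := (x ((s + (Classical.choose h) / 2 ^ (i + 1 + n i)) * 2 ^ (i + 1 + n i) + rho i
          + 2 ^ (i + 1) * (p : ℤ) - Classical.choose h)).isLt
        omega⟩)
  else defA X hne i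

lemma R_F (i : ℕ) (k : ℤ) (y : ∀ j, ℤ → A j) (s : ℤ) :
    R X hne n hcard i (fun t => F n hcard y (t + k)) s
      = y i (s + k / 2 ^ (i + 1 + n i)) := by
  have hmpos : (0:ℤ) < 2 ^ (i + 1 + n i) := by positivity
  have hPpos : (0:ℤ) < 2 ^ (i + 1) := by positivity
  have hsplit : (2 ^ (i + 1 + n i) : ℤ) = 2 ^ (i + 1) * 2 ^ (n i) := by rw [pow_add]
  have hFval : ∀ u : ℤ, (F n hcard y u).val = ell u % 2 + 2 * (D n hcard y u).val :=
    fun u => rfl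
  have hex : ∃ k' : ℤ, ∀ t : ℤ, s * 2 ^ (i + 1 + n i) - 2 * 2 ^ (i + 1 + n i) ≤ t →
      t ≤ s * 2 ^ (i + 1 + n i) + 2 * 2 ^ (i + 1 + n i) →
      (((fun t => F n hcard y (t + k)) t).val % 2 : ℕ) = ell (t + k') % 2 := by
    refine ⟨k, fun t _ _ => ?_⟩
    simp only [hFval]
    omega
  rw [R, dif_pos hex]
  set k' := Classical.choose hex with hk'def
  have hspec := Classical.choose_spec hex
  have hdvd : (2 ^ (i + 1 + n i) : ℤ) ∣ (k - k') := by
    apply phase (i + 1 + n i) k k' (s * 2 ^ (i + 1 + n i) - 2 * 2 ^ (i + 1 + n i))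
    intro t h1 h2
    have h2' : t ≤ s * 2 ^ (i + 1 + n i) + 2 * 2 ^ (i + 1 + n i) := by
      have : (2:ℤ) ^ (i + 1 + n i + 1) = 2 * 2 ^ (i + 1 + n i) := by ring
      omega
    have hthis := hspec t h1 h2'
    rw [← hk'def] at hthis
    simp only [hFval] at hthis
    omega
  obtain ⟨Δ, hΔ⟩ := hdvd
  have hq : k / 2 ^ (i + 1 + n i) = k' / 2 ^ (i + 1 + n i) + Δ := by
    have hk : k = k' + Δ * 2 ^ (i + 1 + n i) := by linarith [hΔ]
    rw [hk, Int.add_mul_ediv_right _ _ hmpos.ne']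
  set q : ℤ := s + k / 2 ^ (i + 1 + n i) with hqdef
  have harg : ∀ p : Fin (n i),
      (s + k' / 2 ^ (i + 1 + n i)) * 2 ^ (i + 1 + n i) + rho i + 2 ^ (i + 1) * (p : ℤ) - k' + k
        = q * 2 ^ (i + 1 + n i) + rho i + 2 ^ (i + 1) * (p : ℤ) := by
    intro p
    rw [hqdef, hq]
    have hk : k = k' + 2 ^ (i + 1 + n i) * Δ := by linarith [hΔ]
    rw [hk]; ring
  have hbound : ∀ p : Fin (n i), 0 ≤ rho i + 2 ^ (i + 1) * (p : ℤ) ∧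
      rho i + 2 ^ (i + 1) * (p : ℤ) < 2 ^ (i + 1 + n i) := by
    intro p
    have hp : (p : ℤ) < n i := by exact_mod_cast p.isLt
    have hp0 : (0:ℤ) ≤ (p : ℤ) := by positivity
    have hn2 : (n i : ℤ) ≤ 2 ^ (n i) := by exact_mod_cast (Nat.lt_two_pow_self (n := n i)).le
    constructor
    · have := rho_nonneg i; nlinarith
    · have h1 := rho_lt i
      have h2 : rho i + 2 ^ (i + 1) * (p:ℤ) < 2 ^ (i + 1) * ((p:ℤ) + 1) := by nlinarith
      have h3 : 2 ^ (i + 1) * ((p:ℤ) + 1) ≤ 2 ^ (i + 1) * 2 ^ (n i) := by nlinarith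
      rw [hsplit]; linarith
  have key : ∀ p : Fin (n i),
      G n hcard y i (q * 2 ^ (i + 1 + n i) + rho i + 2 ^ (i + 1) * (p : ℤ))
        = enc n hcard i (y i q) p := by
    intro p
    set r : ℤ := rho i + 2 ^ (i + 1) * (p : ℤ) with hrdef
    have ht' : q * 2 ^ (i + 1 + n i) + rho i + 2 ^ (i + 1) * (p : ℤ)
        = r + 2 ^ (i + 1 + n i) * q := by rw [hrdef]; ring
    rw [ht']
    have hmod : (r + 2 ^ (i + 1 + n i) * q) % (2 ^ (i + 1 + n i) : ℤ) = r := by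
      rw [Int.add_mul_emod_self_left]
      exact Int.emod_eq_of_lt (hbound p).1 (hbound p).2
    have hdiv : (r + 2 ^ (i + 1 + n i) * q) / (2 ^ (i + 1 + n i) : ℤ) = q := by
      rw [show r + 2 ^ (i + 1 + n i) * q = r + q * 2 ^ (i + 1 + n i) by ring,
        Int.add_mul_ediv_right _ _ hmpos.ne',
        Int.ediv_eq_zero_of_lt (hbound p).1 (hbound p).2, zero_add]
    have hrq : r / (2 ^ (i + 1) : ℤ) = (p : ℤ) := by
      rw [show r = rho i + (p:ℤ) * 2 ^ (i + 1) by rw [hrdef]; ring,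
        Int.add_mul_ediv_right _ _ hPpos.ne',
        Int.ediv_eq_zero_of_lt (rho_nonneg i) (rho_lt i), zero_add]
    rw [G, hmod, hrq, hdiv]
    have htn : ((p : ℤ)).toNat = (p : ℕ) := by simp
    rw [dif_pos (by rw [htn]; exact p.isLt)]
    congr 1
  have hell : ∀ p : Fin (n i),
      ell (q * 2 ^ (i + 1 + n i) + rho i + 2 ^ (i + 1) * (p : ℤ)) = i := by
    intro p
    refine ell_congr (ell_rho i) ?_
    refine ⟨q * 2 ^ (n i) + (p : ℤ), ?_⟩
    rw [hsplit]; ring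
  have hbits : (fun p : Fin (n i) =>
      (⟨((fun t => F n hcard y (t + k))
          ((s + k' / 2 ^ (i + 1 + n i)) * 2 ^ (i + 1 + n i) + rho i
            + 2 ^ (i + 1) * (p : ℤ) - k')).val / 2, by
        have := ((fun t => F n hcard y (t + k))
          ((s + k' / 2 ^ (i + 1 + n i)) * 2 ^ (i + 1 + n i) + rho i
            + 2 ^ (i + 1) * (p : ℤ) - k')).isLt
        omega⟩ : Fin 2)) = enc n hcard i (y i q) := by
    funext p
    apply Fin.ext
    show (F n hcard y (((s + k' / 2 ^ (i + 1 + n i)) * 2 ^ (i + 1 + n i) + rho i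
            + 2 ^ (i + 1) * (p : ℤ) - k') + k)).val / 2 = ((enc n hcard i (y i q)) p).val
    rw [show ((s + k' / 2 ^ (i + 1 + n i)) * 2 ^ (i + 1 + n i) + rho i
            + 2 ^ (i + 1) * (p : ℤ) - k') + k
        = (s + k' / 2 ^ (i + 1 + n i)) * 2 ^ (i + 1 + n i) + rho i
            + 2 ^ (i + 1) * (p : ℤ) - k' + k by ring, harg p]
    have hD : D n hcard y (q * 2 ^ (i + 1 + n i) + rho i + 2 ^ (i + 1) * (p : ℤ))
        = enc n hcard i (y i q) p := by
      rw [D, hell p, key p]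
    rw [hFval, hD]
    omega
  rw [hbits, decA_enc]


lemma choose_eq {α : Sort*} {p q : α → Prop} (hpq : ∀ a, p a ↔ q a)
    (hp : ∃ a, p a) (hq : ∃ a, q a) : Classical.choose hp = Classical.choose hq := by
  have h : p = q := funext fun a => propext (hpq a)
  subst h
  rfl

lemma agree_nhds (T : Finset ℤ) (x₀ : ℤ → Fin 4) :
    {x : ℤ → Fin 4 | ∀ t ∈ T, x t = x₀ t} ∈ nhds x₀ := by
  have hopen : IsOpen {x : ℤ → Fin 4 | ∀ t ∈ T, x t = x₀ t} := by
    have : {x : ℤ → Fin 4 | ∀ t ∈ T, x t = x₀ t} = ⋂ t ∈ T, {x | x t = x₀ t} := by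
      ext x; simp
    rw [this]
    apply isOpen_biInter_finset
    intro t _
    show IsOpen ((fun x : ℤ → Fin 4 => x t) ⁻¹' {x₀ t})
    exact IsOpen.preimage (continuous_apply t) (isOpen_discrete _)
  exact hopen.mem_nhds (fun t _ => rfl)

lemma R_congr (i : ℕ) (s : ℤ) (x₀ : ℤ → Fin 4) :
    ∃ T : Finset ℤ, ∀ x : ℤ → Fin 4, (∀ t ∈ T, x t = x₀ t) →
      R X hne n hcard i x s = R X hne n hcard i x₀ s := by
  set lo : ℤ := s * 2 ^ (i + 1 + n i) - 2 * 2 ^ (i + 1 + n i) with hlo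
  set hi : ℤ := s * 2 ^ (i + 1 + n i) + 2 * 2 ^ (i + 1 + n i) with hhi
  by_cases h₀ : ∃ k : ℤ, ∀ t : ℤ, lo ≤ t → t ≤ hi → ((x₀ t).val % 2 : ℕ) = ell (t + k) % 2
  · set k₀ := Classical.choose h₀ with hk₀
    refine ⟨Finset.Icc lo hi ∪ Finset.image
      (fun p : Fin (n i) => (s + k₀ / 2 ^ (i + 1 + n i)) * 2 ^ (i + 1 + n i) + rho i
          + 2 ^ (i + 1) * (p : ℤ) - k₀) Finset.univ, fun x hx => ?_⟩
    have hwin : ∀ t, lo ≤ t → t ≤ hi → x t = x₀ t := fun t h1 h2 =>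
      hx t (Finset.mem_union_left _ (Finset.mem_Icc.mpr ⟨h1, h2⟩))
    have hiff : ∀ k : ℤ, (∀ t : ℤ, lo ≤ t → t ≤ hi → ((x t).val % 2 : ℕ) = ell (t + k) % 2)
        ↔ (∀ t : ℤ, lo ≤ t → t ≤ hi → ((x₀ t).val % 2 : ℕ) = ell (t + k) % 2) := by
      intro k
      constructor <;> intro h t h1 h2
      · rw [← hwin t h1 h2]; exact h t h1 h2
      · rw [hwin t h1 h2]; exact h t h1 h2
    have hx' : ∃ k : ℤ, ∀ t : ℤ, lo ≤ t → t ≤ hi →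
        ((x t).val % 2 : ℕ) = ell (t + k) % 2 := ⟨k₀, (hiff k₀).mpr (Classical.choose_spec h₀)⟩
    rw [R, dif_pos hx', R, dif_pos h₀]
    have hcc : Classical.choose hx' = k₀ := hk₀ ▸ choose_eq hiff hx' h₀
    congr 1
    funext p
    apply Fin.ext
    show (x _).val / 2 = (x₀ _).val / 2
    rw [hcc]
    rw [hx _ (Finset.mem_union_right _ (Finset.mem_image.mpr ⟨p, Finset.mem_univ p, rfl⟩))]
  · refine ⟨Finset.Icc lo hi, fun x hx => ?_⟩
    have hwin : ∀ t, lo ≤ t → t ≤ hi → x t = x₀ t := fun t h1 h2 =>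
      hx t (Finset.mem_Icc.mpr ⟨h1, h2⟩)
    have hx' : ¬ ∃ k : ℤ, ∀ t : ℤ, lo ≤ t → t ≤ hi →
        ((x t).val % 2 : ℕ) = ell (t + k) % 2 := by
      intro ⟨k, hk⟩
      exact h₀ ⟨k, fun t h1 h2 => by rw [← hwin t h1 h2]; exact hk t h1 h2⟩
    rw [R, dif_neg hx', R, dif_neg h₀]

variable [∀ i, TopologicalSpace (A i)]

lemma R_cont (i : ℕ) : Continuous (R X hne n hcard i) := by
  apply continuous_pi
  intro s
  rw [continuous_iff_continuousAt]
  intro x₀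
  obtain ⟨T, hT⟩ := R_congr X hne n hcard i s x₀
  have hev : (fun x => R X hne n hcard i x s) =ᶠ[nhds x₀]
      (fun _ => R X hne n hcard i x₀ s) := by
    filter_upwards [agree_nhds T x₀] with x hx
    exact hT x hx
  exact (continuousAt_const (y := R X hne n hcard i x₀ s)).congr hev.symm

lemma shift_iter {β : Type*} (M : ℕ) (x : ℤ → β) (t : ℤ) :
    (shiftMap β)^[M] x t = x (t + M) := by
  induction M generalizing x t with
  | zero => simp
  | succ M ih =>
    rw [Function.iterate_succ_apply, ih]
    show x (t + M + 1) = x (t + (M + 1))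
    congr 1
    push_cast
    ring

lemma shift_mem (i : ℕ) (hinvi : shiftMap (A i) '' X i = X i) {y : ℤ → A i}
    (hy : y ∈ X i) (e : ℤ) : (fun s => y (s + e)) ∈ X i := by
  have fwd : ∀ M : ℕ, ∀ z : ℤ → A i, z ∈ X i → (fun s => z (s + (M : ℤ))) ∈ X i := by
    intro M
    induction M with
    | zero => intro z hz; simpa using hz
    | succ M ih =>
      intro z hz
      have h1 : (fun s => z (s + ((M : ℤ) + 1))) = shiftMap (A i) (fun s => z (s + (M : ℤ))) := by
        funext s
        show z (s + ((M : ℤ) + 1)) = z (s + 1 + (M : ℤ))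
        congr 1; ring
      have h2 : (fun s => z (s + ((M : ℤ) + 1))) ∈ X i := by
        rw [h1, ← hinvi]
        exact Set.mem_image_of_mem _ (ih z hz)
      have h3 : ((M + 1 : ℕ) : ℤ) = (M : ℤ) + 1 := by push_cast; ring
      rw [h3]
      exact h2
  have bwd : ∀ M : ℕ, ∀ z : ℤ → A i, z ∈ X i → (fun s => z (s - (M : ℤ))) ∈ X i := by
    intro M
    induction M with
    | zero => intro z hz; simpa using hz
    | succ M ih =>
      intro z hz
      have hz' := ih z hz
      rw [← hinvi] at hz'
      obtain ⟨w, hw, hws⟩ := hz'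
      have hwe : w = fun s => z (s - ((M : ℤ) + 1)) := by
        funext s
        have := congrFun hws (s - 1)
        simp only [shiftMap] at this
        rw [show s - 1 + 1 = s by ring] at this
        rw [this]
        congr 1; ring
      have h3 : ((M + 1 : ℕ) : ℤ) = (M : ℤ) + 1 := by push_cast; ring
      rw [h3, ← hwe]
      exact hw
  rcases e with M | M
  · exact fwd M y hy
  · have h4 : (fun s => y (s + Int.negSucc M)) = fun s => y (s - ((M + 1 : ℕ) : ℤ)) := by
      have harg : ∀ s : ℤ, s + Int.negSucc M = s - ((M + 1 : ℕ) : ℤ) := by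
        intro s
        rw [Int.negSucc_eq]
        push_cast
        ring
      funext s
      rw [harg s]
    rw [h4]
    exact bwd (M + 1) y hy

/-- the big subshift's dense core -/
def Econf : Set (ℤ → Fin 4) :=
  {x | ∃ k : ℤ, ∃ y : ∀ j, ℤ → A j, (∀ j, y j ∈ X j) ∧ ∀ t, x t = F n hcard y (t + k)}

lemma Econf_shift : shiftMap (Fin 4) '' Econf X n hcard = Econf X n hcard := by
  ext x
  constructor
  · rintro ⟨x', ⟨k, y, hy, hx'⟩, rfl⟩
    refine ⟨k + 1, y, hy, fun t => ?_⟩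
    show x' (t + 1) = _
    rw [hx' (t + 1)]
    congr 1; ring
  · rintro ⟨k, y, hy, hx⟩
    refine ⟨fun t => F n hcard y (t + (k - 1)), ⟨k - 1, y, hy, fun t => rfl⟩, ?_⟩
    funext t
    show F n hcard y (t + 1 + (k - 1)) = x t
    rw [hx t]
    congr 1; ring

end Construction

def shiftHomeo (β : Type*) [TopologicalSpace β] : (ℤ → β) ≃ₜ (ℤ → β) where
  toFun := shiftMap β
  invFun x t := x (t - 1)
  left_inv x := funext fun t => by show x (t - 1 + 1) = x t; congr 1; ring
  right_inv x := funext fun t => by show x (t + 1 - 1) = x t; congr 1; ring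
  continuous_toFun := continuous_pi fun t => continuous_apply (t + 1)
  continuous_invFun := continuous_pi fun t => continuous_apply (t - 1)

lemma shift_cont (β : Type*) [TopologicalSpace β] : Continuous (shiftMap β) :=
  continuous_pi fun t => continuous_apply (t + 1)

end Stmt17

open Stmt17 in
theorem stmt17 (A : ℕ → Type*) [∀ i, Finite (A i)]
    [∀ i, TopologicalSpace (A i)] [∀ i, DiscreteTopology (A i)]
    (X : ∀ i, Set (ℤ → A i))
    (hne : ∀ i, (X i).Nonempty)
    (hclosed : ∀ i, IsClosed (X i))
    (hinv : ∀ i, shiftMap (A i) '' X i = X i)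
    (n : ℕ → ℕ) (hn : StrictMono n)
    (hcard : ∀ i, Nat.card (A i) ≤ 2 ^ n i) :
    ∃ (N : ℕ) (Y : Set (ℤ → Fin N)),
      IsClosed Y ∧ shiftMap (Fin N) '' Y = Y ∧ Y.Nonempty ∧
      ∃ (m : ℕ → ℕ) (R : ∀ i, (ℤ → Fin N) → (ℤ → A i)),
        ∀ i, 1 ≤ m i ∧ Continuous (R i) ∧
          (∀ x ∈ Y, R i ((shiftMap (Fin N))^[m i] x) = shiftMap (A i) (R i x)) ∧
          R i '' Y = X i := by
  classical
  set E := Econf X n hcard with hE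
  have hshift : shiftMap (Fin 4) '' closure E = closure E := by
    calc shiftMap (Fin 4) '' closure E
        = (shiftHomeo (Fin 4)) '' closure E := rfl
      _ = closure ((shiftHomeo (Fin 4)) '' E) := Homeomorph.image_closure _ _
      _ = closure (shiftMap (Fin 4) '' E) := rfl
      _ = closure E := by rw [hE, Econf_shift]
  have hNE : (closure E).Nonempty := by
    refine ⟨F n hcard (fun j => (hne j).some), subset_closure ?_⟩
    exact ⟨0, fun j => (hne j).some, fun j => (hne j).some_mem, fun t => by rw [add_zero]⟩
  refine ⟨4, closure E, isClosed_closure, hshift, hNE,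
    fun i => 2 ^ (i + 1 + n i), R X hne n hcard, fun i => ⟨Nat.one_le_two_pow, R_cont X hne n hcard i, ?_, ?_⟩⟩
  · -- commuting
    intro x hx
    have hcont1 : Continuous fun z : ℤ → Fin 4 =>
        R X hne n hcard i ((shiftMap (Fin 4))^[2 ^ (i + 1 + n i)] z) :=
      (R_cont X hne n hcard i).comp ((shift_cont (Fin 4)).iterate _)
    have hcont2 : Continuous fun z : ℤ → Fin 4 => shiftMap (A i) (R X hne n hcard i z) :=
      (shift_cont (A i)).comp (R_cont X hne n hcard i)
    have hEq : Set.EqOn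
        (fun z => R X hne n hcard i ((shiftMap (Fin 4))^[2 ^ (i + 1 + n i)] z))
        (fun z => shiftMap (A i) (R X hne n hcard i z)) (closure E) := by
      apply Set.EqOn.closure ?_ hcont1 hcont2
      rintro z ⟨k, y, hy, hz⟩
      have hz0 : z = fun t => F n hcard y (t + k) := funext hz
      have hz1 : (shiftMap (Fin 4))^[2 ^ (i + 1 + n i)] z
          = fun t => F n hcard y (t + (k + 2 ^ (i + 1 + n i))) := by
        funext t
        rw [shift_iter, hz0]
        show F n hcard y (t + ((2 ^ (i + 1 + n i) : ℕ) : ℤ) + k) = _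
        congr 1
        push_cast
        ring
      show R X hne n hcard i ((shiftMap (Fin 4))^[2 ^ (i + 1 + n i)] z)
          = shiftMap (A i) (R X hne n hcard i z)
      funext s
      have hdiv : (k + 2 ^ (i + 1 + n i)) / (2 ^ (i + 1 + n i) : ℤ)
          = k / (2 ^ (i + 1 + n i) : ℤ) + 1 := by
        rw [show k + (2 ^ (i + 1 + n i) : ℤ) = k + 1 * 2 ^ (i + 1 + n i) by ring,
          Int.add_mul_ediv_right _ _ (by positivity : (2 ^ (i + 1 + n i) : ℤ) ≠ 0)]
      show R X hne n hcard i ((shiftMap (Fin 4))^[2 ^ (i + 1 + n i)] z) s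
          = R X hne n hcard i z (s + 1)
      rw [hz1, R_F, hz0, R_F, hdiv]
      congr 1
      ring
    exact hEq hx
  · -- image
    apply Set.Subset.antisymm
    · have hsub : R X hne n hcard i '' E ⊆ X i := by
        rintro _ ⟨z, ⟨k, y, hy, hz⟩, rfl⟩
        have hz0 : z = fun t => F n hcard y (t + k) := funext hz
        have hR : R X hne n hcard i z = fun s => y i (s + k / (2 ^ (i + 1 + n i) : ℤ)) := by
          funext s
          rw [hz0, R_F]
        rw [hR]
        exact shift_mem X i (hinv i) (hy i) _
      calc R X hne n hcard i '' closure E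
          ⊆ closure (R X hne n hcard i '' E) :=
            image_closure_subset_closure_image (R_cont X hne n hcard i)
        _ ⊆ closure (X i) := closure_mono hsub
        _ = X i := (hclosed i).closure_eq
    · intro x hx
      set y : ∀ j, ℤ → A j := Function.update (fun j => (hne j).some) i x with hy
      have hyj : ∀ j, y j ∈ X j := by
        intro j
        by_cases hji : j = i
        · subst hji
          rw [hy, Function.update_self]
          exact hx
        · rw [hy, Function.update_of_ne hji]
          exact (hne j).some_mem
      refine ⟨F n hcard y, subset_closure ⟨0, y, hyj, fun t => by rw [add_zero]⟩, ?_⟩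
      have h0 : F n hcard y = fun t => F n hcard y (t + 0) := funext fun t => by rw [add_zero]
      funext s
      show R X hne n hcard i (F n hcard y) s = x s
      rw [h0, R_F, Int.zero_ediv, add_zero, hy, Function.update_self]
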